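/- A distal homeomorphism of a compact connected metric space with more than one point has no shadowable points. -/

import Mathlib

open Metric Set

/-- Natural iterates of a homeomorphism. -/
def hnpow {X : Type*} [TopologicalSpace X] (f : X ≃ₜ X) : ℕ → X ≃ₜ X
  | 0 => Homeomorph.refl X
  | n+1 => (hnpow f n).trans f

/-- Integer iterates `fⁿ`, `n ∈ ℤ`, of a homeomorphism. -/
def hpow {X : Type*} [TopologicalSpace X] (f : X ≃ₜ X) : ℤ → X ≃ₜ X
  | Int.ofNat n => hnpow f n
  | Int.negSucc n => hnpow f.symm (n+1)

variable {X : Type*} [MetricSpace X]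

/-- `ξ` is a `δ`-pseudo-orbit of `f`. -/
def IsPseudoOrbit (f : X ≃ₜ X) (δ : ℝ) (ξ : ℤ → X) : Prop :=
  ∀ n : ℤ, dist (f (ξ n)) (ξ (n+1)) ≤ δ

/-- `ξ` is `ε`-shadowed by the orbit of `y`. -/
def ShadowedBy (f : X ≃ₜ X) (ε : ℝ) (y : X) (ξ : ℤ → X) : Prop :=
  ∀ n : ℤ, dist (hpow f n y) (ξ n) ≤ ε

/-- `x` is a shadowable point of `f`. -/
def ShadowablePoint (f : X ≃ₜ X) (x : X) : Prop :=
  ∀ ε > 0, ∃ δ > 0, ∀ ξ : ℤ → X, IsPseudoOrbit f δ ξ → ξ 0 = x →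
    ∃ y, ShadowedBy f ε y ξ

/-- `f` has the pseudo-orbit tracing property. -/
def POTP (f : X ≃ₜ X) : Prop :=
  ∀ ε > 0, ∃ δ > 0, ∀ ξ : ℤ → X, IsPseudoOrbit f δ ξ → ∃ y, ShadowedBy f ε y ξ

/-- `x` is a nonwandering point of `f`. -/
def NonWandering (f : X ≃ₜ X) (x : X) : Prop :=
  ∀ U ∈ nhds x, ∃ k : ℕ, 0 < k ∧ ((hpow f (k : ℤ)) '' U ∩ U).Nonempty

/-- `x` is a chain recurrent point of `f`. -/
def ChainRecurrent (f : X ≃ₜ X) (x : X) : Prop :=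
  ∀ ρ > 0, ∃ n : ℕ, 0 < n ∧ ∃ c : ℕ → X, c 0 = x ∧ c n = x ∧
    ∀ i < n, dist (f (c i)) (c (i+1)) ≤ ρ

/-- `f` is distal: `inf_{n∈ℤ} d(fⁿ x, fⁿ y) > 0` for all distinct `x, y`. -/
def Distal (f : X ≃ₜ X) : Prop :=
  ∀ x y : X, x ≠ y → ∃ c > 0, ∀ n : ℤ, c ≤ dist (hpow f n x) (hpow f n y)

/-- `f` is minimal: every full orbit is dense. -/
def MinimalHomeo (f : X ≃ₜ X) : Prop :=
  ∀ x : X, Dense (Set.range fun n : ℤ => hpow f n x)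

/-- `f` is equicontinuous (uniformly, over all integer iterates). -/
def EquicontinuousHomeo (f : X ≃ₜ X) : Prop :=
  ∀ α > 0, ∃ β > 0, ∀ x y : X, dist x y ≤ β → ∀ n : ℤ, dist (hpow f n x) (hpow f n y) ≤ α

section basic
variable {X : Type*} [TopologicalSpace X] (f : X ≃ₜ X)

lemma hpow_zero (x : X) : hpow f 0 x = x := rfl

lemma hpow_succ : ∀ (n : ℤ) (x : X), hpow f (n + 1) x = f (hpow f n x)
  | Int.ofNat n, x => by
      have : ((Int.ofNat n) + 1) = Int.ofNat (n + 1) := rfl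
      rw [this]
      rfl
  | Int.negSucc 0, x => by
      have : (Int.negSucc 0 + 1) = (0 : ℤ) := rfl
      rw [this]
      show x = f (hnpow f.symm 1 x)
      show x = f (f.symm _)
      simp [hnpow]
  | Int.negSucc (n+1), x => by
      have : (Int.negSucc (n+1) + 1) = Int.negSucc n := by
        simp [Int.negSucc_eq]
      rw [this]
      show hnpow f.symm (n+1) x = f (hnpow f.symm (n+2) x)
      show hnpow f.symm (n+1) x = f (f.symm (hnpow f.symm (n+1) x))
      simp

lemma hpow_pred (n : ℤ) (x : X) : hpow f (n - 1) x = f.symm (hpow f n x) := by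
  have := hpow_succ f (n-1) x
  rw [sub_add_cancel] at this
  rw [this]; simp

lemma hpow_add (m n : ℤ) (x : X) : hpow f (m + n) x = hpow f m (hpow f n x) := by
  induction m using Int.induction_on with
  | zero => rw [zero_add]; rfl
  | succ k ih =>
      have h1 : (k : ℤ) + 1 + n = (k + n) + 1 := by ring
      rw [h1, hpow_succ, ih, hpow_succ]
  | pred k ih =>
      have h1 : (-(k:ℤ) - 1 + n) = (-(k:ℤ) + n) - 1 := by ring
      rw [h1, hpow_pred, ih, hpow_pred]

lemma hpow_natCast (n : ℕ) (x : X) : hpow f (n : ℤ) x = hnpow f n x := rfl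

end basic
section recurrence
open Function

instance instTopEnd (X : Type*) [TopologicalSpace X] : TopologicalSpace (Function.End X) :=
  inferInstanceAs (TopologicalSpace (X → X))

instance instT2End (X : Type*) [TopologicalSpace X] [T2Space X] : T2Space (Function.End X) :=
  inferInstanceAs (T2Space (X → X))

instance instCompEnd (X : Type*) [TopologicalSpace X] [CompactSpace X] :
    CompactSpace (Function.End X) :=
  inferInstanceAs (CompactSpace (X → X))

variable {X : Type*} [MetricSpace X] [CompactSpace X] (f : X ≃ₜ X)

/-- The set of (positive) iterates of `f`, inside `Function.End X`. -/
def iterSet (f : X ≃ₜ X) : Set (Function.End X) :=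
  {g | ∃ n : ℕ, g = fun x => hpow f ((n : ℤ) + 1) x}

lemma iterSet_comp_closed :
    ∀ g ∈ iterSet f, ∀ h ∈ iterSet f, (g * h : Function.End X) ∈ iterSet f := by
  rintro g ⟨n, rfl⟩ h ⟨m, rfl⟩
  refine ⟨n + m + 1, ?_⟩
  funext x
  show hpow f ((n:ℤ)+1) (hpow f ((m:ℤ)+1) x) = hpow f ((((n:ℕ)+m+1 : ℕ) :ℤ)+1) x
  have harith : ((n:ℤ)+1) + ((m:ℤ)+1) = (((n:ℕ)+m+1 : ℕ) :ℤ)+1 := by push_cast; ring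
  rw [← hpow_add, harith]

lemma exists_idem_ellis :
    ∃ u ∈ closure (iterSet f), (u * u : Function.End X) = u := by
  have hcompact : IsCompact (closure (iterSet f)) := isClosed_closure.isCompact
  have contL : ∀ r : Function.End X, Continuous (· * r) := by
    intro r
    show Continuous fun g : X → X => (fun x => g (r x))
    exact continuous_pi fun x => continuous_apply (r x)
  -- closure is a subsemigroup
  have hmulmem : ∀ x ∈ closure (iterSet f), ∀ y ∈ closure (iterSet f),
      (x * y : Function.End X) ∈ closure (iterSet f) := by
    have step1 : ∀ s ∈ iterSet f, ∀ y ∈ closure (iterSet f),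
        (s * y : Function.End X) ∈ closure (iterSet f) := by
      rintro s hs y hy
      obtain ⟨n, rfl⟩ := hs
      have hc : Continuous fun u : X → X => (fun x => hpow f ((n:ℤ)+1) (u x)) := by
        exact continuous_pi fun x =>
          (hpow f ((n:ℤ)+1)).continuous.comp (continuous_apply x)
      have : (fun u : X → X => (fun x => hpow f ((n:ℤ)+1) (u x))) '' closure (iterSet f)
          ⊆ closure ((fun u : X → X => (fun x => hpow f ((n:ℤ)+1) (u x))) '' (iterSet f)) :=
        image_closure_subset_closure_image hc
      have hmem : (fun u : X → X => (fun x => hpow f ((n:ℤ)+1) (u x))) y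
          ∈ closure ((fun u : X → X => (fun x => hpow f ((n:ℤ)+1) (u x))) '' (iterSet f)) :=
        this ⟨y, hy, rfl⟩
      refine closure_mono ?_ hmem
      rintro _ ⟨g, hg, rfl⟩
      exact iterSet_comp_closed f _ ⟨n, rfl⟩ g hg
    intro x hx y hy
    have hρ : Continuous fun u : X → X => (fun z => u (y z)) :=
      continuous_pi fun z => continuous_apply (y z)
    have himg : (fun u : X → X => (fun z => u (y z))) x
        ∈ closure ((fun u : X → X => (fun z => u (y z))) '' (iterSet f)) :=
      image_closure_subset_closure_image hρ ⟨x, hx, rfl⟩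
    have hsub : closure ((fun u : X → X => (fun z => u (y z))) '' (iterSet f))
        ⊆ closure (closure (iterSet f)) := by
      apply closure_mono
      rintro _ ⟨g, hg, rfl⟩
      exact step1 g hg y hy
    replace hsub := hsub.trans (closure_closure (s := iterSet f)).subset
    exact hsub himg
  exact exists_idempotent_in_compact_subsemigroup contL (closure (iterSet f))
    ⟨_, subset_closure ⟨0, rfl⟩⟩ hcompact hmulmem

/-- every point of a distal system is recurrent, uniformly approximated. -/
lemma distal_recurrent (hd : Distal f) (x : X) {η : ℝ} (hη : 0 < η) :
    ∃ n : ℕ, dist (hpow f ((n:ℤ)+1) x) x < η := by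
  obtain ⟨u, hu, huu⟩ := exists_idem_ellis f
  -- u = id
  have hid : ∀ p : X, u p = p := by
    intro p
    by_contra hne
    set z := u p with hz
    have hz2 : u z = z := by
      have : (u * u) p = u p := by rw [huu]
      exact this
    have hpzne : p ≠ z := fun hh => hne (hz.symm.trans hh.symm)
    obtain ⟨c, hc, hsep⟩ := hd p z hpzne
    -- open neighborhood of u in X → X
    have hopen : IsOpen {g : X → X | dist (g p) z < c/2 ∧ dist (g z) z < c/2} := by
      apply IsOpen.inter
      · exact (isOpen_ball.preimage (continuous_apply p) : IsOpen {g : X → X | g p ∈ ball z (c/2)})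
      · exact (isOpen_ball.preimage (continuous_apply z) : IsOpen {g : X → X | g z ∈ ball z (c/2)})
    have humem : u ∈ {g : X → X | dist (g p) z < c/2 ∧ dist (g z) z < c/2} := by
      constructor
      · simpa [hz] using half_pos hc
      · simpa [hz2] using half_pos hc
    obtain ⟨g, hg2, hg1⟩ := mem_closure_iff_nhds.mp hu _ (hopen.mem_nhds humem)
    obtain ⟨n, rfl⟩ := hg1
    have h1 : dist (hpow f ((n:ℤ)+1) p) z < c/2 := hg2.1
    have h2 : dist (hpow f ((n:ℤ)+1) z) z < c/2 := hg2.2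
    have : dist (hpow f ((n:ℤ)+1) p) (hpow f ((n:ℤ)+1) z) < c := by
      calc dist (hpow f ((n:ℤ)+1) p) (hpow f ((n:ℤ)+1) z)
          ≤ dist (hpow f ((n:ℤ)+1) p) z + dist (hpow f ((n:ℤ)+1) z) z := dist_triangle_right _ _ _
        _ < c/2 + c/2 := by linarith
        _ = c := by ring
    exact absurd (hsep ((n:ℤ)+1)) (not_le.mpr this)
  -- id in closure of iterates
  have hopen : IsOpen {g : X → X | dist (g x) x < η} :=
    (isOpen_ball.preimage (continuous_apply x) : IsOpen {g : X → X | g x ∈ ball x η})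
  have humem : u ∈ {g : X → X | dist (g x) x < η} := by
    show dist (u x) x < η
    rw [hid x]
    simpa using hη
  obtain ⟨g, hg1, n, rfl⟩ := mem_closure_iff_nhds.mp hu _ (hopen.mem_nhds humem)
  exact ⟨n, hg1⟩

end recurrence
section chains
open Function
variable {X : Type*} [MetricSpace X] [CompactSpace X] (f : X ≃ₜ X)

/-- `δ`-chain of length `n` from `a` to `b`. -/
def ChainP (f : X ≃ₜ X) (δ : ℝ) (n : ℕ) (a b : X) : Prop :=
  ∃ c : ℕ → X, c 0 = a ∧ c n = b ∧ ∀ i < n, dist (f (c i)) (c (i+1)) ≤ δ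

variable {f}

lemma chain_mono {δ δ' : ℝ} (h : δ ≤ δ') {n a b} (hc : ChainP f δ n a b) :
    ChainP f δ' n a b := by
  obtain ⟨c, h0, h1, hs⟩ := hc
  exact ⟨c, h0, h1, fun i hi => (hs i hi).trans h⟩

lemma chain_concat {δ : ℝ} {n m : ℕ} {a b d : X}
    (h1 : ChainP f δ n a b) (h2 : ChainP f δ m b d) : ChainP f δ (n + m) a d := by
  obtain ⟨c₁, hc10, hc11, hs1⟩ := h1
  obtain ⟨c₂, hc20, hc21, hs2⟩ := h2
  refine ⟨fun k => if k < n then c₁ k else c₂ (k - n), ?_, ?_, ?_⟩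
  · by_cases hn : 0 < n
    · simpa [hn] using hc10
    · have : n = 0 := by omega
      subst this
      simpa using hc20.trans (hc11.symm.trans hc10)
  · have h2 : ¬ (n + m < n) := by omega
    show (if n + m < n then c₁ (n+m) else c₂ (n + m - n)) = d
    rw [if_neg h2, Nat.add_sub_cancel_left]
    exact hc21
  · intro i hi
    dsimp only
    by_cases h : i < n
    · by_cases h' : i + 1 < n
      · rw [if_pos h, if_pos h']
        exact hs1 i h
      · have hin : i + 1 = n := by omega
        rw [if_pos h, if_neg h']
        have he : c₂ (i + 1 - n) = c₁ (i + 1) := by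
          rw [hin, Nat.sub_self, hc20, ← hc11]
        rw [he]
        exact hs1 i h
    · have h' : ¬ (i + 1 < n) := by omega
      have e1 : i + 1 - n = (i - n) + 1 := by omega
      rw [if_neg h, if_neg h', e1]
      exact hs2 (i - n) (by omega)

lemma chain_single {δ : ℝ} {a b : X} (h : dist (f a) b ≤ δ) : ChainP f δ 1 a b := by
  refine ⟨fun k => if k = 0 then a else b, by simp, by simp, ?_⟩
  intro i hi
  have : i = 0 := by omega
  subst this
  simpa using h

lemma chain_orbit {δ : ℝ} (hδ : 0 ≤ δ) (a : X) (k : ℕ) :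
    ChainP f δ k a (hpow f (k : ℤ) a) := by
  refine ⟨fun i => hpow f (i : ℤ) a, by simp [hpow_zero], rfl, ?_⟩
  intro i _
  have : f (hpow f (i : ℤ) a) = hpow f ((i : ℤ) + 1) a := (hpow_succ f (i : ℤ) a).symm
  rw [this]
  have : ((i : ℤ) + 1) = (((i + 1 : ℕ)) : ℤ) := by push_cast; ring
  rw [this]
  simpa using hδ

lemma chain_endpoint {δ ρ : ℝ} {n : ℕ} {a b b' : X} (hn : 1 ≤ n)
    (hc : ChainP f δ n a b) (hb : dist b b' ≤ ρ) : ChainP f (δ + ρ) n a b' := by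
  obtain ⟨c, h0, h1, hs⟩ := hc
  refine ⟨fun i => if i = n then b' else c i,
    by dsimp only; rw [if_neg (by omega : ¬ (0 = n))]; exact h0, by dsimp only; rw [if_pos rfl], ?_⟩
  intro i hi
  dsimp only
  have hin : ¬ (i = n) := by omega
  rw [if_neg hin]
  by_cases h' : i + 1 = n
  · rw [if_pos h']
    calc dist (f (c i)) b' ≤ dist (f (c i)) (c (i+1)) + dist (c (i+1)) b' := dist_triangle _ _ _
      _ ≤ δ + ρ := by
          refine add_le_add (hs i hi) ?_
          rw [h', h1]
          exact hb
  · rw [if_neg h']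
    have := hs i hi
    have hρ : 0 ≤ ρ := le_trans dist_nonneg hb
    linarith

/-- uniform continuity of `f`. -/
lemma ucont (f : X ≃ₜ X) {ε : ℝ} (hε : 0 < ε) :
    ∃ γ > 0, ∀ p q : X, dist p q < γ → dist (f p) (f q) < ε := by
  have h : UniformContinuous f := CompactSpace.uniformContinuous_of_continuous f.continuous
  obtain ⟨γ, hγ, hh⟩ := Metric.uniformContinuous_iff.mp h ε hε
  exact ⟨γ, hγ, fun p q hpq => hh hpq⟩

/-- loops at every point (uses distality via recurrence). -/
lemma chain_loop (hd : Distal f) {δ : ℝ} (hδ : 0 < δ) (x : X) :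
    ∃ lam, 1 ≤ lam ∧ ChainP f δ lam x x := by
  obtain ⟨k, hk⟩ := distal_recurrent f hd x hδ
  refine ⟨k + 1, by omega, fun i => if i = k + 1 then x else hpow f (i : ℤ) x,
    by dsimp only; rw [if_neg (by omega : ¬ (0 = k+1))]; exact hpow_zero f x, by dsimp only; rw [if_pos rfl], ?_⟩
  intro i hi
  dsimp only
  have hik : ¬ (i = k + 1) := by omega
  rw [if_neg hik]
  have hsucc : f (hpow f (i : ℤ) x) = hpow f ((i : ℤ) + 1) x := (hpow_succ f _ x).symm
  by_cases h' : i + 1 = k + 1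
  · rw [if_pos h', hsucc]
    have hi' : i = k := by omega
    subst hi'
    exact le_of_lt hk
  · rw [if_neg h', hsucc]
    have hcast : ((i : ℤ) + 1) = (((i + 1 : ℕ)) : ℤ) := by push_cast; ring
    rw [hcast, dist_self]
    exact le_of_lt hδ

/-- chains into a neighborhood of `c` can be rerouted through a loop at `c`
to reach any point near `c`, without increasing the tolerance. -/
lemma extend_loop (hd : Distal f) {δ : ℝ} (hδ : 0 < δ) (c : X) :
    ∃ ρ > 0, ∃ lam, 1 ≤ lam ∧ ChainP f δ lam c c ∧
      ∀ a n r w, dist c r < ρ → dist c w < ρ → ChainP f δ n a r →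
        ChainP f δ (n + lam) a w := by
  obtain ⟨γ0, hγ0, hγ⟩ := ucont f (by linarith : (0:ℝ) < δ/4)
  obtain ⟨lam, hlam, ℓ, hℓ0, hℓl, hℓs⟩ := chain_loop hd (by linarith : (0:ℝ) < δ/4) c
  refine ⟨min γ0 (δ/4), by positivity, lam, hlam,
    chain_mono (by linarith) ⟨ℓ, hℓ0, hℓl, hℓs⟩, ?_⟩
  rintro a n r w hr hw ⟨c₀, h00, h01, h0s⟩
  have hrγ : dist (f c) (f r) < δ/4 := hγ c r (lt_of_lt_of_le hr (min_le_left _ _))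
  have hwδ : dist c w < δ/4 := lt_of_lt_of_le hw (min_le_right _ _)
  refine ⟨fun i => if i ≤ n then c₀ i else if i < n + lam then ℓ (i - n) else w,
    by dsimp only; rw [if_pos (Nat.zero_le n)]; exact h00, ?_, ?_⟩
  · have e1 : ¬ (n + lam ≤ n) := by omega
    have e2 : ¬ (n + lam < n + lam) := by omega
    show (if n + lam ≤ n then c₀ (n+lam) else if n + lam < n + lam then ℓ (n + lam - n) else w) = w
    rw [if_neg e1, if_neg e2]
  · intro i hi
    dsimp only
    rcases lt_trichotomy i n with h | h | h
    · have e1 : i ≤ n := by omega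
      have e2 : i + 1 ≤ n := by omega
      rw [if_pos e1, if_pos e2]
      exact h0s i h
    · subst h
      have e2 : ¬ (i + 1 ≤ i) := by omega
      by_cases hl1 : lam = 1
      · have e3 : ¬ (i + 1 < i + lam) := by omega
        rw [if_pos (le_refl i), if_neg e2, if_neg e3, h01]
        have hfc : dist (f c) c ≤ δ/4 := by
          have := hℓs 0 (by omega)
          rw [hℓ0] at this
          have : dist (f c) (ℓ 1) ≤ δ/4 := this
          rwa [(by omega : 1 = lam), hℓl] at this
        calc dist (f r) w ≤ dist (f r) (f c) + dist (f c) c + dist c w := dist_triangle4 _ _ _ _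
          _ ≤ δ/4 + δ/4 + δ/4 := by
              rw [dist_comm (f r) (f c)]
              exact add_le_add (add_le_add (le_of_lt hrγ) hfc) (le_of_lt hwδ)
          _ ≤ δ := by linarith
      · have e3 : i + 1 < i + lam := by omega
        have e4 : i + 1 - i = 1 := by omega
        rw [if_pos (le_refl i), if_neg e2, if_pos e3, e4, h01]
        have hfc : dist (f c) (ℓ 1) ≤ δ/4 := by
          have := hℓs 0 (by omega)
          rwa [hℓ0] at this
        calc dist (f r) (ℓ 1) ≤ dist (f r) (f c) + dist (f c) (ℓ 1) := dist_triangle _ _ _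
          _ ≤ δ/4 + δ/4 := by
              rw [dist_comm (f r) (f c)]
              exact add_le_add (le_of_lt hrγ) hfc
          _ ≤ δ := by linarith
    · have e1 : ¬ (i ≤ n) := by omega
      have e2 : i < n + lam := hi
      have e5 : i - n + 1 = i + 1 - n := by omega
      by_cases h' : i + 1 < n + lam
      · have e3 : ¬ (i + 1 ≤ n) := by omega
        rw [if_neg e1, if_pos e2, if_neg e3, if_pos h', ← e5]
        exact (hℓs (i - n) (by omega)).trans (by linarith)
      · have e3 : ¬ (i + 1 ≤ n) := by omega
        have e4 : ¬ (i + 1 < n + lam) := by omega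
        rw [if_neg e1, if_pos e2, if_neg e3, if_neg e4]
        have hlast : dist (f (ℓ (i - n))) c ≤ δ/4 := by
          have := hℓs (i - n) (by omega)
          rwa [(by omega : i - n + 1 = lam), hℓl] at this
        calc dist (f (ℓ (i - n))) w ≤ dist (f (ℓ (i - n))) c + dist c w := dist_triangle _ _ _
          _ ≤ δ/4 + δ/4 := add_le_add hlast (le_of_lt hwδ)
          _ ≤ δ := by linarith

variable [ConnectedSpace X]

/-- chain transitivity. -/
lemma reach (hd : Distal f) {δ : ℝ} (hδ : 0 < δ) (a b : X) :
    ∃ n, 1 ≤ n ∧ ChainP f δ n a b := by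
  set R : Set X := {y | ∃ n, 1 ≤ n ∧ ChainP f (δ/2) n a y} with hR
  have hopen : IsOpen (closure R) := by
    rw [Metric.isOpen_iff]
    intro c hc
    obtain ⟨ρ, hρ, lam, hlam, _, hext⟩ := extend_loop hd (by linarith : (0:ℝ) < δ/2) c
    refine ⟨ρ, hρ, fun w hw => ?_⟩
    obtain ⟨r, hrR, hrc⟩ := Metric.mem_closure_iff.mp hc ρ hρ
    obtain ⟨n, hn1, hcn⟩ := hrR
    exact subset_closure ⟨n + lam, by omega, hext a n r w hrc (by simpa [dist_comm] using hw) hcn⟩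
  have hne : (closure R).Nonempty := ⟨f a, subset_closure ⟨1, le_refl 1, chain_single (by simp; linarith)⟩⟩
  have huniv : closure R = univ := IsClopen.eq_univ ⟨isClosed_closure, hopen⟩ hne
  have hb : b ∈ closure R := by rw [huniv]; trivial
  obtain ⟨r, hrR, hrb⟩ := Metric.mem_closure_iff.mp hb (δ/2) (by linarith)
  obtain ⟨n, hn1, hcn⟩ := hrR
  refine ⟨n, hn1, ?_⟩
  have := chain_endpoint hn1 hcn (le_of_lt ((dist_comm b r ▸ hrb : dist r b < δ/2)))
  simpa [add_halves] using this

end chains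
section largelengths
variable {X : Type*} [MetricSpace X] [CompactSpace X] [ConnectedSpace X] {f : X ≃ₜ X}

lemma loop_mul {δ : ℝ} {s : ℕ} {a : X} (h : ChainP f δ s a a) :
    ∀ k, 1 ≤ k → ChainP f δ (k * s) a a := by
  intro k
  induction k with
  | zero => omega
  | succ k ih =>
      intro _
      by_cases hk : 1 ≤ k
      · have : (k + 1) * s = k * s + s := by ring
        rw [this]
        exact chain_concat (ih hk) h
      · have : k = 0 := by omega
        subst this
        simpa using h

lemma loops_all_large (hd : Distal f) {δ : ℝ} (hδ : 0 < δ) (a : X) :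
    ∃ N, ∀ n, N ≤ n → ChainP f δ n a a := by
  classical
  set Sδ : Set ℕ := {n | 1 ≤ n ∧ ChainP f δ n a a} with hSδ
  have hSadd : ∀ {p q}, p ∈ Sδ → q ∈ Sδ → p + q ∈ Sδ := by
    rintro p q ⟨hp1, hpc⟩ ⟨hq1, hqc⟩
    exact ⟨by omega, chain_concat hpc hqc⟩
  set okS : ℕ → Prop := fun r => r = 0 ∨ r ∈ Sδ with hokS
  have okS_add : ∀ {p q}, okS p → okS q → okS (p + q) := by
    rintro p q (rfl | hp) (rfl | hq)
    · exact Or.inl rfl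
    · exact Or.inr (by simpa using hq)
    · exact Or.inr (by simpa using hp)
    · exact Or.inr (hSadd hp hq)
  set D : AddSubgroup ℤ :=
    { carrier := {z | ∃ p q : ℕ, okS p ∧ okS q ∧ z = (p : ℤ) - q}
      zero_mem' := ⟨0, 0, Or.inl rfl, Or.inl rfl, by simp⟩
      add_mem' := by
        rintro x y ⟨p, q, hp, hq, rfl⟩ ⟨p', q', hp', hq', rfl⟩
        exact ⟨p + p', q + q', okS_add hp hp', okS_add hq hq', by push_cast; ring⟩
      neg_mem' := by
        rintro x ⟨p, q, hp, hq, rfl⟩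
        exact ⟨q, p, hq, hp, by push_cast; ring⟩ } with hD
  have hmemS : ∀ n ∈ Sδ, (n : ℤ) ∈ D := fun n hn => ⟨n, 0, Or.inr hn, Or.inl rfl, by simp⟩
  have hTex : ∃ k : ℕ, 0 < k ∧ (k : ℤ) ∈ D := by
    obtain ⟨lam, hlam, hloop⟩ := chain_loop hd hδ a
    exact ⟨lam, by omega, hmemS lam ⟨hlam, hloop⟩⟩
  set g : ℕ := Nat.find hTex with hgdef
  have hspec : 0 < g ∧ (g : ℤ) ∈ D := by rw [hgdef]; exact Nat.find_spec hTex
  have hmin : ∀ k, k < g → ¬ (0 < k ∧ (k : ℤ) ∈ D) := by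
    intro k hk
    rw [hgdef] at hk
    exact Nat.find_min hTex hk
  clear_value g
  clear hgdef
  obtain ⟨hg0, hgD⟩ := hspec
  have hdvd : ∀ z ∈ D, (g : ℤ) ∣ z := by
    intro z hz
    have hmod : z % (g : ℤ) ∈ D := by
      rw [Int.emod_def]
      refine D.sub_mem hz ?_
      have := D.zsmul_mem hgD (z / (g : ℤ))
      rwa [zsmul_eq_mul, mul_comm] at this
    have hr0 : 0 ≤ z % (g : ℤ) := Int.emod_nonneg z (by exact_mod_cast hg0.ne')
    have hrg : z % (g : ℤ) < g := Int.emod_lt_of_pos z (by exact_mod_cast hg0)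
    by_contra hne
    have hrne : z % (g : ℤ) ≠ 0 := fun h => hne (Int.dvd_of_emod_eq_zero h)
    have hlt : (z % (g : ℤ)).toNat < g := by omega
    refine hmin _ hlt ⟨by omega, ?_⟩
    rwa [Int.toNat_of_nonneg hr0]
  have hdvdS : ∀ n ∈ Sδ, g ∣ n := fun n hn =>
    Int.natCast_dvd_natCast.mp (hdvd _ (hmemS n hn))
  -- `g = 1` via connectedness
  have hg1 : g = 1 := by
    by_contra hgne
    have hg2 : 2 ≤ g := by omega
    set A : ℕ → Set X := fun i => {b | ∃ n, 1 ≤ n ∧ n % g = i ∧ ChainP f (δ/2) n a b} with hA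
    have hAopen : ∀ i, i < g → IsOpen (closure (A i)) := by
      intro i hig
      rw [Metric.isOpen_iff]
      intro c hc
      obtain ⟨ρ, hρ, lam, hlam, hloop, hext⟩ := extend_loop hd (by linarith : (0:ℝ) < δ/2) c
      have hglam : g ∣ lam := by
        obtain ⟨p, hp1, hpc⟩ := reach hd (by linarith : (0:ℝ) < δ/2) a c
        obtain ⟨q, hq1, hqc⟩ := reach hd (by linarith : (0:ℝ) < δ/2) c a
        have hb1 : p + q ∈ Sδ :=
          ⟨by omega, chain_mono (by linarith) (chain_concat hpc hqc)⟩
        have hb2 : p + (lam + q) ∈ Sδ :=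
          ⟨by omega, chain_mono (by linarith) (chain_concat hpc (chain_concat hloop hqc))⟩
        have := Nat.dvd_sub (hdvdS _ hb2) (hdvdS _ hb1)
        rwa [(by omega : p + (lam + q) - (p + q) = lam)] at this
      refine ⟨ρ, hρ, fun w hw => subset_closure ?_⟩
      obtain ⟨r, hrA, hrc⟩ := Metric.mem_closure_iff.mp hc ρ hρ
      obtain ⟨n, hn1, hni, hcn⟩ := hrA
      refine ⟨n + lam, by omega, ?_, hext a n r w hrc (by simpa [Metric.mem_ball, dist_comm] using hw) hcn⟩
      obtain ⟨t, rfl⟩ := hglam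
      rw [Nat.add_mul_mod_self_left, hni]
    have hUdisj : ∀ i j, i < g → j < g → ∀ b : X,
        b ∈ closure (A i) → b ∈ closure (A j) → i = j := by
      intro i j hig hjg b hbi hbj
      have hchain : ∀ k, k < g → b ∈ closure (A k) → ∃ n, 1 ≤ n ∧ n % g = k ∧ ChainP f δ n a b := by
        intro k hk hbk
        obtain ⟨r, ⟨n, hn1, hnk, hcn⟩, hbr⟩ := Metric.mem_closure_iff.mp hbk (δ/2) (by linarith)
        refine ⟨n, hn1, hnk, ?_⟩
        have := chain_endpoint hn1 hcn (le_of_lt (by rwa [dist_comm] at hbr))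
        rwa [add_halves] at this
      obtain ⟨ni, hni1, hnii, hci⟩ := hchain i hig hbi
      obtain ⟨nj, hnj1, hnjj, hcj⟩ := hchain j hjg hbj
      obtain ⟨m, hm1, hmc⟩ := reach hd hδ b a
      have hsi : g ∣ ni + m := hdvdS _ ⟨by omega, chain_concat hci hmc⟩
      have hsj : g ∣ nj + m := hdvdS _ ⟨by omega, chain_concat hcj hmc⟩
      have h1 : ni ≡ i [MOD g] := by
        unfold Nat.ModEq
        rw [hnii, Nat.mod_eq_of_lt hig]
      have h2 : nj ≡ j [MOD g] := by
        unfold Nat.ModEq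
        rw [hnjj, Nat.mod_eq_of_lt hjg]
      have h3 : ni + m ≡ nj + m [MOD g] := by
        unfold Nat.ModEq
        rw [Nat.mod_eq_zero_of_dvd hsi, Nat.mod_eq_zero_of_dvd hsj]
      have h4 : ni ≡ nj [MOD g] := Nat.ModEq.add_right_cancel' m h3
      have h5 : i ≡ j [MOD g] := h1.symm.trans (h4.trans h2)
      have : i % g = j % g := h5
      rwa [Nat.mod_eq_of_lt hig, Nat.mod_eq_of_lt hjg] at this
    have horb : ∀ k : ℕ, 1 ≤ k → hpow f (k : ℤ) a ∈ A (k % g) := by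
      intro k hk
      exact ⟨k, hk, rfl, chain_orbit (by linarith) a k⟩
    have h1g : 1 % g = 1 := Nat.mod_eq_of_lt (by omega)
    have h2lt : 2 % g < g := Nat.mod_lt _ (by omega)
    have hU1 : closure (A 1) = univ := by
      refine IsClopen.eq_univ ⟨isClosed_closure, hAopen 1 (by omega)⟩ ?_
      refine ⟨hpow f (1 : ℤ) a, subset_closure ?_⟩
      have := horb 1 (le_refl 1)
      rwa [h1g] at this
    have hU2ne : (closure (A (2 % g))).Nonempty :=
      ⟨hpow f (2 : ℤ) a, subset_closure (horb 2 (by omega))⟩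
    obtain ⟨b, hb2⟩ := hU2ne
    have hb1 : b ∈ closure (A 1) := by rw [hU1]; trivial
    have h12 := hUdisj 1 (2 % g) (by omega) h2lt b hb1 hb2
    rcases (by omega : g = 2 ∨ 2 < g) with hcase | hcase
    · rw [hcase, Nat.mod_self] at h12
      omega
    · rw [Nat.mod_eq_of_lt hcase] at h12
      omega
  -- extract consecutive pair
  subst hg1
  obtain ⟨p, q, okp, okq, hpq⟩ := hgD
  have hpq' : p = q + 1 := by
    have : (p : ℤ) = (q : ℤ) + 1 := by push_cast at hpq ⊢; linarith
    exact_mod_cast this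
  rcases okq with rfl | hq
  · -- 1 ∈ Sδ
    have hp1 : p ∈ Sδ := by
      rcases okp with rfl | h
      · omega
      · exact h
    rw [(by omega : p = 1)] at hp1
    refine ⟨1, fun n hn => ?_⟩
    have := loop_mul hp1.2 n hn
    rwa [mul_one] at this
  · have hq1 : 1 ≤ q := hq.1
    have hp : q + 1 ∈ Sδ := by
      rcases okp with rfl | h
      · omega
      · rwa [hpq'] at h
    refine ⟨q * (q + 1) + q, fun n hn => ?_⟩
    set y := n % q with hy
    set d := n / q with hd'
    have hdm : q * d + y = n := Nat.div_add_mod n q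
    have hyq : y < q := Nat.mod_lt _ (by omega)
    have hdq : q + 1 ≤ d := by
      rw [hd', Nat.le_div_iff_mul_le (by omega : 0 < q)]
      calc (q + 1) * q = q * (q+1) := by ring
        _ ≤ n := by omega
    have hyd : y < d := by omega
    have heq : n = (d - y) * q + y * (q + 1) := by
      have e1 : (d - y) * q = d * q - y * q := by
        rw [Nat.sub_mul]
      have e2 : y * (q + 1) = y * q + y := by ring
      have e3 : y * q ≤ d * q := Nat.mul_le_mul_right q (le_of_lt hyd)
      have e4 : d * q = q * d := mul_comm d q
      omega
    rw [heq]
    by_cases hy0 : y = 0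
    · rw [hy0]
      simpa using loop_mul hq.2 (d - 0) (by omega)
    · exact chain_concat (loop_mul hq.2 (d - y) (by omega)) (loop_mul hp.2 y (by omega))
  
lemma reach_all_large (hd : Distal f) {δ : ℝ} (hδ : 0 < δ) (a b : X) :
    ∃ N, ∀ n, N ≤ n → ChainP f δ n a b := by
  obtain ⟨N₀, hN₀⟩ := loops_all_large hd hδ a
  obtain ⟨s, hs1, hsc⟩ := reach hd hδ a b
  refine ⟨N₀ + s, fun n hn => ?_⟩
  have : ChainP f δ ((n - s) + s) a b := chain_concat (hN₀ (n - s) (by omega)) hsc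
  rwa [Nat.sub_add_cancel (by omega)] at this

end largelengths
section mixing
variable {X : Type*} [MetricSpace X] [CompactSpace X] [ConnectedSpace X] {f : X ≃ₜ X}

lemma mixing (hd : Distal f) {x₀ : X} (hx : ShadowablePoint f x₀) (u v : X) {ρ : ℝ}
    (hρ : 0 < ρ) :
    ∃ N : ℕ, ∀ n : ℕ, N ≤ n → ∃ w : X, dist w u < ρ ∧ dist (hpow f (n : ℤ) w) v < ρ := by
  obtain ⟨δ, hδ, hshad⟩ := hx (ρ/2) (by linarith)
  obtain ⟨s, hs1, c₁, h10, h11, h1s⟩ := reach hd hδ u x₀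
  obtain ⟨M, hM⟩ := reach_all_large hd hδ x₀ v
  refine ⟨s + M + 1, fun n hn => ?_⟩
  set m : ℕ := n - s with hm
  have hmM : M + 1 ≤ m := by omega
  have hm1 : 1 ≤ m := by omega
  obtain ⟨c₂, h20, h21, h2s⟩ := hM m (by omega)
  set cc : ℕ → X := fun k => if k ≤ s then c₁ k else c₂ (k - s) with hcc
  have hcc0 : cc 0 = u := by
    rw [hcc]; dsimp only; rw [if_pos (Nat.zero_le s)]; exact h10
  have hccs : cc s = x₀ := by
    rw [hcc]; dsimp only; rw [if_pos (le_refl s)]; exact h11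
  have hccsm : cc (s + m) = v := by
    rw [hcc]; dsimp only; rw [if_neg (by omega : ¬ (s + m ≤ s)), Nat.add_sub_cancel_left]
    exact h21
  have hccstep : ∀ i, i < s + m → dist (f (cc i)) (cc (i+1)) ≤ δ := by
    intro i hi
    rw [hcc]; dsimp only
    by_cases h1 : i + 1 ≤ s
    · rw [if_pos (by omega : i ≤ s), if_pos h1]
      exact h1s i (by omega)
    · by_cases h2 : i ≤ s
      · have his : i = s := by omega
        rw [if_pos h2, if_neg h1, his, h11, ← h20,
          (by omega : s + 1 - s = 1)]
        exact h2s 0 (by omega)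
      · rw [if_neg h2, if_neg h1, (by omega : i + 1 - s = (i - s) + 1)]
        exact h2s (i - s) (by omega)
  -- the pseudo-orbit
  set ξ : ℤ → X := fun t =>
    if t < -(s:ℤ) then hpow f (t + s) u
    else if t ≤ (m:ℤ) then cc (t + s).toNat
    else hpow f (t - m) v with hξ
  have hξ0 : ξ 0 = x₀ := by
    rw [hξ]; dsimp only
    rw [if_neg (by omega : ¬ ((0:ℤ) < -(s:ℤ))), if_pos (by exact_mod_cast Nat.zero_le m)]
    have : ((0:ℤ) + s).toNat = s := by omega
    rw [this, hccs]
  have hps : IsPseudoOrbit f δ ξ := by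
    intro t
    rw [hξ]; dsimp only
    by_cases hA : t + 1 < -(s:ℤ)
    · rw [if_pos (by omega : t < -(s:ℤ)), if_pos hA]
      have : f (hpow f (t + s) u) = hpow f ((t + s) + 1) u := (hpow_succ f _ u).symm
      rw [this, (by ring : (t + s) + 1 = t + 1 + (s:ℤ)), dist_self]
      linarith
    · by_cases hB : t < -(s:ℤ)
      · have ht : t + 1 = -(s:ℤ) := by omega
        rw [if_pos hB, if_neg hA, if_pos (by omega : t + 1 ≤ (m:ℤ))]
        have h1 : (t + 1 + (s:ℤ)).toNat = 0 := by omega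
        rw [h1, hcc0]
        have h2 : t + (s:ℤ) = -1 := by omega
        rw [h2]
        have : f (hpow f (-1) u) = hpow f ((-1) + 1) u := (hpow_succ f _ u).symm
        rw [this]
        norm_num
        rw [hpow_zero, dist_self]
        linarith
      · by_cases hC : t + 1 ≤ (m:ℤ)
        · rw [if_neg hB, if_pos (by omega : t ≤ (m:ℤ)), if_neg hA, if_pos hC]
          have h1 : (t + 1 + (s:ℤ)).toNat = (t + s).toNat + 1 := by omega
          rw [h1]
          exact hccstep (t + s).toNat (by omega)
        · by_cases hD : t ≤ (m:ℤ)
          · have ht : t = (m:ℤ) := by omega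
            rw [if_neg hB, if_pos hD, if_neg hA, if_neg (by omega : ¬ (t + 1 ≤ (m:ℤ)))]
            have h1 : (t + (s:ℤ)).toNat = s + m := by omega
            rw [h1, hccsm]
            have h2 : t + 1 - (m:ℤ) = 1 := by omega
            rw [h2]
            have : hpow f 1 v = f (hpow f 0 v) := hpow_succ f 0 v
            rw [this, hpow_zero, dist_self]
            linarith
          · rw [if_neg hB, if_neg hD, if_neg hA, if_neg (by omega : ¬ (t + 1 ≤ (m:ℤ)))]
            have : f (hpow f (t - m) v) = hpow f ((t - m) + 1) v := (hpow_succ f _ v).symm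
            rw [this, (by ring : (t - m) + 1 = t + 1 - (m:ℤ)), dist_self]
            linarith
  obtain ⟨y, hy⟩ := hshad ξ hps hξ0
  have hys : dist (hpow f (-(s:ℤ)) y) u ≤ ρ/2 := by
    have := hy (-(s:ℤ))
    rw [hξ] at this; dsimp only at this
    rwa [if_neg (by omega : ¬ (-(s:ℤ) < -(s:ℤ))),
      if_pos (by omega : -(s:ℤ) ≤ (m:ℤ)), (by omega : (-(s:ℤ) + s).toNat = 0), hcc0] at this
  have hym : dist (hpow f ((m:ℤ)) y) v ≤ ρ/2 := by
    have := hy ((m:ℤ))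
    rw [hξ] at this; dsimp only at this
    rwa [if_neg (by omega : ¬ ((m:ℤ) < -(s:ℤ))), if_pos (le_refl (m:ℤ)),
      (by omega : ((m:ℤ) + s).toNat = s + m), hccsm] at this
  refine ⟨hpow f (-(s:ℤ)) y, by linarith, ?_⟩
  have : hpow f (n : ℤ) (hpow f (-(s:ℤ)) y) = hpow f ((n:ℤ) + (-(s:ℤ))) y :=
    (hpow_add f (n:ℤ) (-(s:ℤ)) y).symm
  rw [this, (by omega : (n:ℤ) + (-(s:ℤ)) = (m:ℤ))]
  linarith

end mixing
section final
variable {X : Type*} [MetricSpace X] [CompactSpace X] [ConnectedSpace X] {f : X ≃ₜ X}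

lemma step_lemma (hd : Distal f) {x₀ : X} (hx : ShadowablePoint f x₀) (p₀ : X) :
    ∀ (k : ℕ) (u v : X) (r : ℝ), 0 < r →
      ∃ (u' v' : X) (r' : ℝ) (n : ℕ), 0 < r' ∧
        (∀ z, dist z u' ≤ r' → dist z u < r) ∧
        (∀ z, dist z v' ≤ r' → dist z v < r) ∧
        (∀ z z', dist z u' ≤ r' → dist z' v' ≤ r' →
          dist (hpow f (n:ℤ) z) (hpow f (n:ℤ) z') < 4 * (1/2)^k) := by
  intro k u v r hr
  have hhalf : (0:ℝ) < (1/2)^k := by positivity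
  have hρ : 0 < min r ((1/2)^k : ℝ) := lt_min hr hhalf
  obtain ⟨N₁, hN₁⟩ := mixing hd hx u p₀ hρ
  obtain ⟨N₂, hN₂⟩ := mixing hd hx v p₀ hρ
  obtain ⟨u', hu'1, hu'2⟩ := hN₁ (max N₁ N₂) (le_max_left _ _)
  obtain ⟨v', hv'1, hv'2⟩ := hN₂ (max N₁ N₂) (le_max_right _ _)
  set n := max N₁ N₂ with hn
  obtain ⟨ru, hru, hruc⟩ :=
    Metric.continuous_iff.mp (hpow f (n:ℤ)).continuous u' ((1/2)^k) hhalf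
  obtain ⟨rv, hrv, hrvc⟩ :=
    Metric.continuous_iff.mp (hpow f (n:ℤ)).continuous v' ((1/2)^k) hhalf
  have hdu : dist u' u < r := lt_of_lt_of_le hu'1 (min_le_left _ _)
  have hdv : dist v' v < r := lt_of_lt_of_le hv'1 (min_le_left _ _)
  refine ⟨u', v', min (min (ru/2) (rv/2)) (min ((r - dist u' u)/2) ((r - dist v' v)/2)), n,
    lt_min (lt_min (by linarith) (by linarith)) (lt_min (by linarith) (by linarith)),
    ?_, ?_, ?_⟩
  · intro z hz
    have h1 : dist z u' ≤ (r - dist u' u)/2 :=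
      hz.trans ((min_le_right _ _).trans (min_le_left _ _))
    calc dist z u ≤ dist z u' + dist u' u := dist_triangle _ _ _
      _ < r := by linarith
  · intro z hz
    have h1 : dist z v' ≤ (r - dist v' v)/2 :=
      hz.trans ((min_le_right _ _).trans (min_le_right _ _))
    calc dist z v ≤ dist z v' + dist v' v := dist_triangle _ _ _
      _ < r := by linarith
  · intro z z' hz hz'
    have h1 : dist z u' < ru :=
      lt_of_le_of_lt (hz.trans ((min_le_left _ _).trans (min_le_left _ _))) (by linarith)
    have h2 : dist z' v' < rv :=
      lt_of_le_of_lt (hz'.trans ((min_le_left _ _).trans (min_le_right _ _))) (by linarith)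
    have e1 : dist (hpow f (n:ℤ) z) (hpow f (n:ℤ) u') < (1/2)^k := hruc z h1
    have e2 : dist (hpow f (n:ℤ) z') (hpow f (n:ℤ) v') < (1/2)^k := hrvc z' h2
    have e3 : dist (hpow f (n:ℤ) u') p₀ < (1/2)^k := lt_of_lt_of_le hu'2 (min_le_right _ _)
    have e4 : dist (hpow f (n:ℤ) v') p₀ < (1/2)^k := lt_of_lt_of_le hv'2 (min_le_right _ _)
    have e5 : dist (hpow f (n:ℤ) u') (hpow f (n:ℤ) v') ≤
        dist (hpow f (n:ℤ) u') p₀ + dist p₀ (hpow f (n:ℤ) v') := dist_triangle _ _ _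
    have e6 : dist p₀ (hpow f (n:ℤ) v') = dist (hpow f (n:ℤ) v') p₀ := dist_comm _ _
    have e7 : dist (hpow f (n:ℤ) v') (hpow f (n:ℤ) z') = dist (hpow f (n:ℤ) z') (hpow f (n:ℤ) v') :=
      dist_comm _ _
    calc dist (hpow f (n:ℤ) z) (hpow f (n:ℤ) z')
        ≤ dist (hpow f (n:ℤ) z) (hpow f (n:ℤ) u') + dist (hpow f (n:ℤ) u') (hpow f (n:ℤ) v')
          + dist (hpow f (n:ℤ) v') (hpow f (n:ℤ) z') := dist_triangle4 _ _ _ _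
      _ < 4 * (1/2)^k := by rw [e7]; linarith

theorem stmt11' [Nontrivial X] (f : X ≃ₜ X) (h : Distal f) : ∀ x : X, ¬ ShadowablePoint f x := by
  intro x₀ hx
  obtain ⟨a, b, hab⟩ := exists_pair_ne X
  have hr₀ : (0:ℝ) < dist a b / 3 := by
    have := dist_pos.mpr hab
    linarith
  -- choice on the step
  choose U V R NN hpos hnu hnv hpair using step_lemma h hx a
  -- the recursive sequence of (center,center,radius)
  let next : ∀ (k : ℕ), {p : X × X × ℝ // 0 < p.2.2} → {p : X × X × ℝ // 0 < p.2.2} :=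
    fun k p => ⟨(U k p.1.1 p.1.2.1 p.1.2.2 p.2, V k p.1.1 p.1.2.1 p.1.2.2 p.2,
      R k p.1.1 p.1.2.1 p.1.2.2 p.2), hpos k p.1.1 p.1.2.1 p.1.2.2 p.2⟩
  let seq : ℕ → {p : X × X × ℝ // 0 < p.2.2} :=
    fun k => Nat.rec ⟨(a, b, dist a b / 3), hr₀⟩ next k
  have hseq : ∀ k, seq (k+1) = next k (seq k) := fun k => rfl
  set uk : ℕ → X := fun k => (seq k).1.1 with huk
  set vk : ℕ → X := fun k => (seq k).1.2.1 with hvk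
  set rk : ℕ → ℝ := fun k => (seq k).1.2.2 with hrk
  set nk : ℕ → ℕ := fun k => NN k (uk k) (vk k) (rk k) (seq k).2 with hnk
  have hproj : ∀ k, uk (k+1) = U k (uk k) (vk k) (rk k) (seq k).2 ∧
      vk (k+1) = V k (uk k) (vk k) (rk k) (seq k).2 ∧
      rk (k+1) = R k (uk k) (vk k) (rk k) (seq k).2 := fun k => ⟨rfl, rfl, rfl⟩
  have hrpos : ∀ k, 0 < rk k := fun k => (seq k).2
  have hnestu : ∀ k z, dist z (uk (k+1)) ≤ rk (k+1) → dist z (uk k) < rk k := by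
    intro k z hz
    exact hnu k (uk k) (vk k) (rk k) (seq k).2 z hz
  have hnestv : ∀ k z, dist z (vk (k+1)) ≤ rk (k+1) → dist z (vk k) < rk k := by
    intro k z hz
    exact hnv k (uk k) (vk k) (rk k) (seq k).2 z hz
  have hpair' : ∀ k z z', dist z (uk (k+1)) ≤ rk (k+1) → dist z' (vk (k+1)) ≤ rk (k+1) →
      dist (hpow f ((nk k):ℤ) z) (hpow f ((nk k):ℤ) z') < 4 * (1/2)^k := by
    intro k z z' hz hz'
    exact hpair k (uk k) (vk k) (rk k) (seq k).2 z z' hz hz'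
  -- nested compact balls
  have hBu : (⋂ k, Metric.closedBall (uk k) (rk k)).Nonempty := by
    apply IsCompact.nonempty_iInter_of_sequence_nonempty_isCompact_isClosed
    · intro k z hz
      exact Metric.mem_closedBall.mpr (le_of_lt (hnestu k z (Metric.mem_closedBall.mp hz)))
    · intro k
      exact ⟨uk k, Metric.mem_closedBall.mpr (by simp [le_of_lt (hrpos k)])⟩
    · exact (isClosed_closedBall).isCompact
    · intro k
      exact isClosed_closedBall
  have hBv : (⋂ k, Metric.closedBall (vk k) (rk k)).Nonempty := by
    apply IsCompact.nonempty_iInter_of_sequence_nonempty_isCompact_isClosed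
    · intro k z hz
      exact Metric.mem_closedBall.mpr (le_of_lt (hnestv k z (Metric.mem_closedBall.mp hz)))
    · intro k
      exact ⟨vk k, Metric.mem_closedBall.mpr (by simp [le_of_lt (hrpos k)])⟩
    · exact (isClosed_closedBall).isCompact
    · intro k
      exact isClosed_closedBall
  obtain ⟨us, hus⟩ := hBu
  obtain ⟨vs, hvs⟩ := hBv
  have husk : ∀ k, dist us (uk k) ≤ rk k := fun k =>
    Metric.mem_closedBall.mp (Set.mem_iInter.mp hus k)
  have hvsk : ∀ k, dist vs (vk k) ≤ rk k := fun k =>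
    Metric.mem_closedBall.mp (Set.mem_iInter.mp hvs k)
  -- distinctness
  have hu0 : dist us a ≤ dist a b / 3 := husk 0
  have hv0 : dist vs b ≤ dist a b / 3 := hvsk 0
  have hne : us ≠ vs := by
    intro hh
    have h1 : dist a b ≤ dist a us + dist us b := dist_triangle _ _ _
    have h2 : dist a us ≤ dist a b / 3 := by rw [dist_comm]; exact hu0
    have h3 : dist us b ≤ dist a b / 3 := by rw [hh]; exact hv0
    have hd0 := dist_pos.mpr hab
    linarith
  obtain ⟨c, hc, hsep⟩ := h us vs hne
  obtain ⟨k, hk⟩ := exists_pow_lt_of_lt_one (show (0:ℝ) < c/4 by linarith)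
    (by norm_num : (1/2 : ℝ) < 1)
  have hlt := hpair' k us vs (husk (k+1)) (hvsk (k+1))
  have hge := hsep ((nk k) : ℤ)
  have : (4:ℝ) * (1/2)^k < c := by linarith
  linarith

end final

theorem stmt11 [CompactSpace X] [ConnectedSpace X] [Nontrivial X]
    (f : X ≃ₜ X) (h : Distal f) : ∀ x : X, ¬ ShadowablePoint f x := stmt11' f h
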